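/- Let U be a unitary in M₂(D) lifting to a unitary Ũ in a unital C*-algebra T mapping onto D, with Ũ = [[S⊗M₊ + S*⊗M₋, P⊗P₊],[P⊗Q₋, S*⊗M₊* + S⊗M₋*]] where S is the Toeplitz isometry (S*S = 1, SS* = 1-P), and M₊, M₋, P₊, P₋, Q₊, Q₋ satisfy the relations of Proposition 5.1 (M₊M₊* = P₊, M₊*M₊ = Q₊, M₋M₋* = P₋, M₋*M₋ = Q₋, P₊+P₋ = 1, Q₊+Q₋ = 1, M₊M₋* = M₊*M₋ = 0). Then Ũ·diag(1,0)·Ũ* = [[1⊗1 - P⊗P₊, 0],[0, P⊗Q₋]]. -/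
import Mathlib


open Matrix
open scoped Matrix

/-- With `S` the Toeplitz isometry (`S*S = 1`, `SS* = 1-P`) and
`M±, P±, Q±` satisfying the relations of Proposition 5.1, the unitary lift
`Ũ = [[S⊗M₊ + S*⊗M₋, P⊗P₊],[P⊗Q₋, S*⊗M₊* + S⊗M₋*]]` satisfies
`Ũ·diag(1,0)·Ũ* = [[1⊗1 - P⊗P₊, 0],[0, P⊗Q₋]]`.  Elementary tensors `t ⊗ b` are
modelled as `jT t * jB b` in an ambient `*`-ring `C` with commuting `*`-homomorphisms
`jT`, `jB`. -/
theorem stmt19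
    (B : Type*) [Ring B] [StarRing B]
    (Mp Mm Pp Pm Qp Qm : B)
    (hPp : Mp * star Mp = Pp) (hQp : star Mp * Mp = Qp)
    (hPm : Mm * star Mm = Pm) (hQm : star Mm * Mm = Qm)
    (hPpsa : star Pp = Pp) (hPpidem : Pp * Pp = Pp)
    (hPmsa : star Pm = Pm) (hPmidem : Pm * Pm = Pm)
    (hPsum : Pp + Pm = 1)
    (hQpsa : star Qp = Qp) (hQpidem : Qp * Qp = Qp)
    (hQmsa : star Qm = Qm) (hQmidem : Qm * Qm = Qm)
    (hQsum : Qp + Qm = 1)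
    (hPpMp : Pp * Mp = Mp) (hMpQp : Mp * Qp = Mp)
    (hPmMm : Pm * Mm = Mm) (hMmQm : Mm * Qm = Mm)
    (horth1 : Mp * star Mm = 0) (horth2 : star Mp * Mm = 0)
    (T : Type*) [Ring T] [StarRing T]
    (S P : T) (hS : star S * S = 1) (hSS : S * star S = 1 - P)
    (hPsa : star P = P) (hPidem : P * P = P)
    (C : Type*) [Ring C] [StarRing C]
    (jT : T →+* C) (hjTstar : ∀ t : T, jT (star t) = star (jT t))
    (jB : B →+* C) (hjBstar : ∀ b : B, jB (star b) = star (jB b))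
    (hcomm : ∀ (t : T) (b : B), jT t * jB b = jB b * jT t) :
    let Utilde : Matrix (Fin 2) (Fin 2) C :=
      !![jT S * jB Mp + jT (star S) * jB Mm, jT P * jB Pp;
         jT P * jB Qm, jT (star S) * jB (star Mp) + jT S * jB (star Mm)]
    Utilde * !![(1 : C), 0; 0, 0] * Utildeᴴ
      = !![jT 1 * jB 1 - jT P * jB Pp, 0; 0, jT P * jB Qm] := by
  intro Utilde
  have mix : ∀ (a d : T) (b c : B),
      (jT a * jB b) * (jB c * jT d) = jT (a * d) * jB (b * c) := by
    intro a d b c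
    rw [mul_assoc, ← mul_assoc (jB b), ← _root_.map_mul jB, ← hcomm, ← mul_assoc,
      ← _root_.map_mul jT]
  have hMpQm : Mp * Qm = 0 := by
    have hQm' : Qm = 1 - Qp := eq_sub_of_add_eq' hQsum
    rw [hQm', mul_sub, mul_one, hMpQp, sub_self]
  have hSP : star S * P = 0 := by
    have hP : P = 1 - S * star S := by rw [hSS, sub_sub_cancel]
    rw [hP, mul_sub, mul_one, ← mul_assoc, hS, one_mul, sub_self]
  have hstarA : star (jT S * jB Mp + jT (star S) * jB Mm)
      = jB (star Mp) * jT (star S) + jB (star Mm) * jT S := by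
    simp only [star_add, StarMul.star_mul, ← hjTstar, ← hjBstar, star_star]
  have hstarC : star (jT P * jB Qm) = jB Qm * jT P := by
    simp only [StarMul.star_mul, ← hjTstar, ← hjBstar, hPsa, hQmsa]
  have hAA : (jT S * jB Mp + jT (star S) * jB Mm)
      * star (jT S * jB Mp + jT (star S) * jB Mm)
      = jT 1 * jB 1 - jT P * jB Pp := by
    rw [hstarA, add_mul, mul_add, mul_add, mix, mix, mix, mix, hPp, horth1, hSS]
    have h1 : Mm * star Mp = 0 := by
      have := congrArg star horth1
      simpa [StarMul.star_mul] using this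
    rw [h1, hS, hPm]
    simp only [map_zero, mul_zero, add_zero, zero_add, _root_.map_sub, sub_mul]
    rw [← hPsum, _root_.map_add, mul_add]
    abel
  have hAC : (jT S * jB Mp + jT (star S) * jB Mm) * star (jT P * jB Qm) = 0 := by
    rw [hstarC, add_mul, mix, mix, hMpQm, hSP]
    simp
  have hCA : (jT P * jB Qm) * star (jT S * jB Mp + jT (star S) * jB Mm) = 0 := by
    have h := congrArg star hAC
    rw [StarMul.star_mul, star_star, star_zero] at h
    exact h
  have hCC : (jT P * jB Qm) * star (jT P * jB Qm) = jT P * jB Qm := by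
    rw [hstarC, mix, hPidem, hQmidem]
  ext i j
  fin_cases i <;> fin_cases j <;>
    simp only [Utilde, Matrix.mul_apply, Fin.sum_univ_two, Matrix.conjTranspose_apply,
      Matrix.cons_val', Matrix.cons_val_zero, Matrix.cons_val_one, Matrix.head_cons,
      Matrix.empty_val', Matrix.cons_val_fin_one, Matrix.head_fin_const, Fin.isValue, Fin.mk_zero, Fin.mk_one, Matrix.of_apply,
      mul_one, mul_zero, zero_mul, one_mul, add_zero, zero_add]
  · exact hAA
  · exact hAC
  · exact hCA
  · exact hCC
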